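/- There exists a code C ⊆ (Fin 6 → Fin 4) with |C| ≥ 164 such that any two distinct codewords of C are at Hamming distance at least 3. (Such a nonlinear (6, 164, 3) code over an alphabet of size 4, where 164 = ⌈4^6/5²⌉, is obtained from the linear MDS code [6,4,3] over GF(5) by restriction to a sub-alphabet of size 4.) -/

import Mathlib

private def hcol : Fin 6 → ZMod 5 × ZMod 5 :=
  ![(1,0),(1,1),(1,2),(1,3),(1,4),(0,1)]

private def syn (x : Fin 6 → Fin 4) : ZMod 5 × ZMod 5 :=
  ∑ i, ((x i : ℕ) : ZMod 5) • hcol i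

private lemma hcol_indep : ∀ i j : Fin 6, i ≠ j → ∀ a b : ZMod 5,
    a • hcol i + b • hcol j = 0 → a = 0 ∧ b = 0 := by decide

private lemma hcol_ne : ∀ i : Fin 6, ∀ a : ZMod 5, a • hcol i = 0 → a = 0 := by decide

private lemma fin4cast_inj {u v : Fin 4} (h : ((u : ℕ) : ZMod 5) = ((v : ℕ) : ZMod 5)) : u = v := by
  have h1 : ((u : ℕ) : ZMod 5).val = u := ZMod.val_natCast_of_lt (by omega)
  have h2 : ((v : ℕ) : ZMod 5).val = v := ZMod.val_natCast_of_lt (by omega)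
  exact Fin.ext (by rw [← h1, ← h2, h])

private lemma dist_ge (x y : Fin 6 → Fin 4) (hs : syn x = syn y) (hne : x ≠ y) :
    3 ≤ hammingDist x y := by
  by_contra hlt
  push_neg at hlt
  set e : Fin 6 → ZMod 5 := fun i => ((x i : ℕ) : ZMod 5) - ((y i : ℕ) : ZMod 5) with he
  have hzero : ∀ i, e i = 0 ↔ x i = y i := by
    intro i
    constructor
    · intro h; exact fin4cast_inj (by rwa [he, sub_eq_zero] at h)
    · intro h; show ((x i : ℕ) : ZMod 5) - ((y i : ℕ) : ZMod 5) = 0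
      rw [h, sub_self]
  have hsum : ∑ i, e i • hcol i = 0 := by
    have : ∑ i, e i • hcol i = syn x - syn y := by
      simp only [syn, he, sub_smul, Finset.sum_sub_distrib]
    rw [this, hs, sub_self]
  set s : Finset (Fin 6) := Finset.univ.filter (fun i => x i ≠ y i) with hsdef
  have hdist : hammingDist x y = s.card := rfl
  have hsum2 : ∑ i ∈ s, e i • hcol i = 0 := by
    rw [← hsum]
    refine Finset.sum_subset (Finset.subset_univ s) ?_
    intro i _ hi
    have : x i = y i := by
      by_contra hc
      exact hi (Finset.mem_filter.mpr ⟨Finset.mem_univ i, hc⟩)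
    rw [(hzero i).mpr this, zero_smul]
  have hpos : s.Nonempty := by
    rw [Finset.filter_nonempty_iff]
    obtain ⟨i, hi⟩ := Function.ne_iff.mp hne
    exact ⟨i, Finset.mem_univ i, hi⟩
  have hcard : s.card = 1 ∨ s.card = 2 := by
    have := Finset.card_pos.mpr hpos
    omega
  rcases hcard with h1 | h2
  · obtain ⟨i, hi⟩ := Finset.card_eq_one.mp h1
    rw [hi, Finset.sum_singleton] at hsum2
    have hei : e i ≠ 0 := by
      have : i ∈ s := hi ▸ Finset.mem_singleton_self i
      exact fun h => (Finset.mem_filter.mp this).2 ((hzero i).mp h)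
    exact hei (hcol_ne i _ hsum2)
  · obtain ⟨i, j, hij, hij2⟩ := Finset.card_eq_two.mp h2
    rw [hij2, Finset.sum_insert (by simp [hij]), Finset.sum_singleton] at hsum2
    have hei : e i ≠ 0 := by
      have : i ∈ s := hij2 ▸ by simp
      exact fun h => (Finset.mem_filter.mp this).2 ((hzero i).mp h)
    exact hei (hcol_indep i j hij _ _ hsum2).1

/-- **A nonlinear `(6, 164, 3)₄` code.**
There is a code of length `6` over an alphabet of size `4` with at least `164 = ⌈4^6/5²⌉`
codewords and minimum Hamming distance at least `3` (obtained from the MDS code `[6,4,3]` over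
`GF(5)` by restriction to a sub-alphabet of size `4`). -/
theorem exists_code_6_164_3 :
    ∃ C : Set (Fin 6 → Fin 4),
      164 ≤ Nat.card C ∧
      (∀ x ∈ C, ∀ y ∈ C, x ≠ y → 3 ≤ hammingDist x y) := by
  have hcards : Fintype.card (ZMod 5 × ZMod 5) * 163 < Fintype.card (Fin 6 → Fin 4) := by
    simp [Fintype.card_prod]
  obtain ⟨y0, hy0⟩ := Fintype.exists_lt_card_fiber_of_mul_lt_card (f := syn) hcards
  refine ⟨{x | syn x = y0}, ?_, ?_⟩
  · have : Nat.card {x | syn x = y0} = (Finset.univ.filter (fun x => syn x = y0)).card := by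
      rw [Nat.card_eq_fintype_card]
      exact (Fintype.card_subtype _)
    rw [this]
    simp at hy0 ⊢
    omega
  · intro x hx y hy hne
    exact dist_ge x y (hx.trans hy.symm) hne
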